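/- Let $0 < \theta < 1$, $\pi/2 < l \le \pi$ with $l(1-\theta) > \pi/2$. Then $\int_\theta^{l(1-\theta)} \sin^2 t\, dt + \int_\theta^{l - \pi/2} \cot^2(\pi - l + t)\sin^2 t\, dt + \int_{\pi/2}^{l(1-\theta)} \cos^2 t\, dt \le \pi$, and as $\theta \to 0^+$, $l \to \pi^-$ (with $l \ge \pi - \varphi(\theta)$ for suitable $\varphi(\theta) \to 0$), the left-hand side converges to $\int_0^\pi (\sin^2 t + \cos^2 t)\, dt = \pi$. -/

import Mathlib

open Filter Set Real Topology intervalIntegral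

private lemma aux_sub (θ l : ℝ) :
    (∫ t in θ..(l - Real.pi / 2), Real.cos (Real.pi - l + t) ^ 2) =
      ∫ t in (θ + (Real.pi - l))..(Real.pi / 2), Real.cos t ^ 2 := by
  have h := intervalIntegral.integral_comp_add_right (a := θ) (b := l - Real.pi / 2)
    (f := fun x => Real.cos x ^ 2) (Real.pi - l)
  rw [show l - Real.pi / 2 + (Real.pi - l) = Real.pi / 2 by ring] at h
  rw [← h]; congr 1; funext t; rw [add_comm]

private lemma aux_ne (θ l : ℝ) (hθ : 0 < θ) (hlπ : l ≤ Real.pi) :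
    ∀ t ∈ Icc θ (l - Real.pi / 2), Real.sin (Real.pi - l + t) ≠ 0 := by
  intro t ht
  have : 0 < Real.sin (Real.pi - l + t) := by
    apply Real.sin_pos_of_pos_of_lt_pi
    · rcases ht with ⟨h1, h2⟩; nlinarith [Real.pi_pos]
    · rcases ht with ⟨h1, h2⟩; nlinarith [Real.pi_pos]
  exact this.ne'

private lemma aux_cont (θ l : ℝ) (hθ : 0 < θ) (hlπ : l ≤ Real.pi) :
    ContinuousOn (fun t => Real.cot (Real.pi - l + t) ^ 2 * Real.sin t ^ 2)
      (Icc θ (l - Real.pi / 2)) := by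
  simp only [Real.cot_eq_cos_div_sin]
  exact ((((Real.continuous_cos.comp (continuous_const.add continuous_id)).continuousOn.div
    ((Real.continuous_sin.comp (continuous_const.add continuous_id)).continuousOn)
    (aux_ne θ l hθ hlπ)).pow 2).mul ((Real.continuous_sin.continuousOn).pow 2))

private lemma mid_upper (θ l : ℝ) (hθ : 0 < θ) (hlπ : l ≤ Real.pi)
    (hθb : θ < l - Real.pi / 2) :
    (∫ t in θ..(l - Real.pi / 2), Real.cot (Real.pi - l + t) ^ 2 * Real.sin t ^ 2) ≤
      ∫ t in (θ + (Real.pi - l))..(Real.pi / 2), Real.cos t ^ 2 := by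
  have hpi := Real.pi_pos
  have hδ0 : 0 ≤ Real.pi - l := by linarith
  rw [← aux_sub θ l]
  apply intervalIntegral.integral_mono_on hθb.le
  · exact ((aux_cont θ l hθ hlπ).mono (by rw [uIcc_of_le hθb.le])).intervalIntegrable
  · exact ((Real.continuous_cos.comp (continuous_const.add continuous_id)).pow 2).intervalIntegrable _ _
  · intro t ht
    rcases ht with ⟨ht1, ht2⟩
    have hs0 : 0 < Real.pi - l + t := by linarith
    have hs2 : Real.pi - l + t ≤ Real.pi / 2 := by linarith
    have hsinpos : 0 < Real.sin (Real.pi - l + t) :=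
      Real.sin_pos_of_pos_of_lt_pi hs0 (by linarith)
    have hst : Real.sin t ≤ Real.sin (Real.pi - l + t) :=
      Real.sin_le_sin_of_le_of_le_pi_div_two (by linarith) hs2 (by linarith)
    have hsint0 : 0 ≤ Real.sin t :=
      Real.sin_nonneg_of_nonneg_of_le_pi (by linarith) (by linarith)
    have hcot : Real.cot (Real.pi - l + t) ^ 2 * Real.sin (Real.pi - l + t) ^ 2 =
        Real.cos (Real.pi - l + t) ^ 2 := by
      rw [Real.cot_eq_cos_div_sin, div_pow, div_mul_cancel₀ _ (pow_ne_zero 2 hsinpos.ne')]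
    calc Real.cot (Real.pi - l + t) ^ 2 * Real.sin t ^ 2
        ≤ Real.cot (Real.pi - l + t) ^ 2 * Real.sin (Real.pi - l + t) ^ 2 :=
          mul_le_mul_of_nonneg_left (pow_le_pow_left₀ hsint0 hst 2) (sq_nonneg _)
      _ = Real.cos (Real.pi - l + t) ^ 2 := hcot

private lemma mid_lower (θ l : ℝ) (hθ : 0 < θ) (hθ4 : θ ≤ 1/4) (hlπ : l ≤ Real.pi)
    (hδθ : Real.pi - l ≤ θ ^ 2) (hθb : θ < l - Real.pi / 2) :
    (1 - 3 * θ) * (∫ t in (θ + (Real.pi - l))..(Real.pi / 2), Real.cos t ^ 2) ≤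
      ∫ t in θ..(l - Real.pi / 2), Real.cot (Real.pi - l + t) ^ 2 * Real.sin t ^ 2 := by
  have hpi := Real.pi_pos
  have hδ0 : 0 ≤ Real.pi - l := by linarith
  rw [← aux_sub θ l, ← intervalIntegral.integral_const_mul]
  apply intervalIntegral.integral_mono_on hθb.le
  · exact (continuous_const.mul
      ((Real.continuous_cos.comp (continuous_const.add continuous_id)).pow 2)).intervalIntegrable _ _
  · exact ((aux_cont θ l hθ hlπ).mono (by rw [uIcc_of_le hθb.le])).intervalIntegrable
  · intro t ht
    rcases ht with ⟨ht1, ht2⟩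
    have hs0 : 0 < Real.pi - l + t := by linarith
    have hs2 : Real.pi - l + t ≤ Real.pi / 2 := by linarith
    have hsinpos : 0 < Real.sin (Real.pi - l + t) :=
      Real.sin_pos_of_pos_of_lt_pi hs0 (by linarith)
    have hsint0 : 0 ≤ Real.sin t :=
      Real.sin_nonneg_of_nonneg_of_le_pi (by linarith) (by linarith)
    have hcot : Real.cot (Real.pi - l + t) ^ 2 * Real.sin (Real.pi - l + t) ^ 2 =
        Real.cos (Real.pi - l + t) ^ 2 := by
      rw [Real.cot_eq_cos_div_sin, div_pow, div_mul_cancel₀ _ (pow_ne_zero 2 hsinpos.ne')]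
    have hss : Real.sin (Real.pi - l + t) ≤ Real.sin t + (Real.pi - l) := by
      have h1 : Real.pi - l + t = t + (Real.pi - l) := by ring
      rw [h1, Real.sin_add]
      have h2 : Real.sin (Real.pi - l) ≤ Real.pi - l := Real.sin_le hδ0
      have h3 : 0 ≤ Real.sin (Real.pi - l) :=
        Real.sin_nonneg_of_nonneg_of_le_pi hδ0 (by linarith)
      have h4 : Real.cos (Real.pi - l) ≤ 1 := Real.cos_le_one _
      have h5 : Real.cos t ≤ 1 := Real.cos_le_one t
      have h6 : 0 ≤ Real.cos t := Real.cos_nonneg_of_mem_Icc ⟨by linarith, by linarith⟩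
      nlinarith
    have hθ1 : θ ≤ 1 := by linarith
    have hθsin : 3/4 * θ ≤ Real.sin θ := by
      have := Real.sin_gt_sub_cube hθ
      nlinarith
    have hsθt : Real.sin θ ≤ Real.sin t :=
      Real.sin_le_sin_of_le_of_le_pi_div_two (by linarith) (by linarith) ht1
    have hd : Real.pi - l ≤ 4/3 * θ * Real.sin t := by nlinarith
    have key : (1 - 3 * θ) * Real.sin (Real.pi - l + t) ^ 2 ≤ Real.sin t ^ 2 := by
      have h2 : Real.sin t + (Real.pi - l) ≤ (1 + 4/3 * θ) * Real.sin t := by linarith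
      have h1 : Real.sin (Real.pi - l + t) ^ 2 ≤ ((1 + 4/3 * θ) * Real.sin t) ^ 2 :=
        pow_le_pow_left₀ hsinpos.le (hss.trans h2) 2
      have h4 : (1 - 3 * θ) * ((1 + 4/3 * θ) * Real.sin t) ^ 2 ≤ Real.sin t ^ 2 := by
        nlinarith [sq_nonneg (Real.sin t),
          mul_nonneg (mul_nonneg hθ.le hθ.le) (sq_nonneg (Real.sin t)),
          mul_nonneg hθ.le (sq_nonneg (Real.sin t))]
      have h5 : (1 - 3 * θ) * Real.sin (Real.pi - l + t) ^ 2 ≤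
          (1 - 3 * θ) * ((1 + 4/3 * θ) * Real.sin t) ^ 2 :=
        mul_le_mul_of_nonneg_left h1 (by linarith)
      linarith
    calc (1 - 3 * θ) * Real.cos (Real.pi - l + t) ^ 2
        = Real.cot (Real.pi - l + t) ^ 2 * ((1 - 3 * θ) * Real.sin (Real.pi - l + t) ^ 2) := by
          rw [← hcot]; ring
      _ ≤ Real.cot (Real.pi - l + t) ^ 2 * Real.sin t ^ 2 :=
          mul_le_mul_of_nonneg_left key (sq_nonneg _)

private lemma sinsq_bounds (θ u : ℝ) (hθ : 0 < θ) (hθ1 : θ < 1) (hu2 : Real.pi / 2 < u)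
    (huπ : u ≤ Real.pi) :
    (u - θ) / 2 ≤ (∫ t in θ..u, Real.sin t ^ 2) ∧
      (∫ t in θ..u, Real.sin t ^ 2) ≤ Real.pi / 2 := by
  have hpi := Real.pi_gt_three
  rw [integral_sin_sq]
  have h1 : Real.sin θ ≤ θ := Real.sin_le hθ.le
  have h2 : 0 ≤ Real.sin θ := Real.sin_nonneg_of_nonneg_of_le_pi hθ.le (by linarith)
  have h3 : Real.cos θ ≤ 1 := Real.cos_le_one θ
  have h4 : 0 ≤ Real.cos θ := Real.cos_nonneg_of_mem_Icc ⟨by linarith, by linarith⟩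
  have h5 : 0 ≤ Real.sin u := Real.sin_nonneg_of_nonneg_of_le_pi (by linarith) huπ
  have h6 : Real.sin u ≤ Real.pi - u := by
    have := Real.sin_pi_sub u
    have h7 : Real.sin (Real.pi - u) ≤ Real.pi - u := Real.sin_le (by linarith)
    linarith [this ▸ h7]
  have h8 : Real.cos u ≤ 0 :=
    Real.cos_nonpos_of_pi_div_two_le_of_le hu2.le (by linarith)
  have h9 : -1 ≤ Real.cos u := Real.neg_one_le_cos u
  constructor
  · nlinarith [mul_nonneg h2 h4, mul_nonneg h5 (neg_nonneg.2 h8)]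
  · nlinarith [mul_le_mul h1 h3 h4 hθ.le, mul_le_mul h6 (by linarith : -Real.cos u ≤ 1)
      (neg_nonneg.2 h8) (by linarith : (0:ℝ) ≤ Real.pi - u)]

private lemma cossq_tail_bounds (u : ℝ) (hu2 : Real.pi / 2 ≤ u) (huπ : u ≤ Real.pi) :
    u - 3 * Real.pi / 4 ≤ (∫ t in (Real.pi / 2)..u, Real.cos t ^ 2) ∧
      (∫ t in (Real.pi / 2)..u, Real.cos t ^ 2) ≤ Real.pi / 4 := by
  have hpi := Real.pi_gt_three
  rw [integral_cos_sq, Real.cos_pi_div_two]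
  have h5 : 0 ≤ Real.sin u := Real.sin_nonneg_of_nonneg_of_le_pi (by linarith) huπ
  have h6 : Real.sin u ≤ Real.pi - u := by
    have := Real.sin_pi_sub u
    have h7 : Real.sin (Real.pi - u) ≤ Real.pi - u := Real.sin_le (by linarith)
    linarith [this ▸ h7]
  have h8 : Real.cos u ≤ 0 :=
    Real.cos_nonpos_of_pi_div_two_le_of_le hu2 (by linarith)
  have h9 : -1 ≤ Real.cos u := Real.neg_one_le_cos u
  constructor
  · nlinarith [mul_le_mul h6 (by linarith : -Real.cos u ≤ 1)
      (neg_nonneg.2 h8) (by linarith : (0:ℝ) ≤ Real.pi - u)]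
  · nlinarith [mul_nonneg h5 (neg_nonneg.2 h8)]

private lemma cossq_head_bounds (a : ℝ) (ha : 0 ≤ a) (ha2 : a ≤ Real.pi / 2) :
    Real.pi / 4 - a ≤ (∫ t in a..(Real.pi / 2), Real.cos t ^ 2) ∧
      (∫ t in a..(Real.pi / 2), Real.cos t ^ 2) ≤ Real.pi / 4 := by
  have hpi := Real.pi_gt_three
  rw [integral_cos_sq, Real.cos_pi_div_two]
  have h1 : Real.sin a ≤ a := Real.sin_le ha
  have h2 : 0 ≤ Real.sin a := Real.sin_nonneg_of_nonneg_of_le_pi ha (by linarith)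
  have h3 : Real.cos a ≤ 1 := Real.cos_le_one a
  have h4 : 0 ≤ Real.cos a := Real.cos_nonneg_of_mem_Icc ⟨by linarith, ha2⟩
  constructor
  · nlinarith [mul_le_mul h3 h1 h2 zero_le_one]
  · nlinarith [mul_nonneg h4 h2]

private lemma part1 (θ l : ℝ) (hθ : 0 < θ) (hθ1 : θ < 1) (hl2 : Real.pi / 2 < l)
    (hlπ : l ≤ Real.pi) (hu : Real.pi / 2 < l * (1 - θ)) :
    (∫ t in θ..(l * (1 - θ)), Real.sin t ^ 2) +
      (∫ t in θ..(l - Real.pi / 2), Real.cot (Real.pi - l + t) ^ 2 * Real.sin t ^ 2) +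
      (∫ t in (Real.pi / 2)..(l * (1 - θ)), Real.cos t ^ 2) ≤ Real.pi := by
  have hpi := Real.pi_gt_three
  have hθb : θ < l - Real.pi / 2 := by nlinarith
  have huπ : l * (1 - θ) ≤ Real.pi := by nlinarith
  have hA := (sinsq_bounds θ (l * (1 - θ)) hθ hθ1 hu huπ).2
  have hC := (cossq_tail_bounds (l * (1 - θ)) hu.le huπ).2
  have hI := (cossq_head_bounds (θ + (Real.pi - l)) (by linarith) (by linarith)).2
  have hM := mid_upper θ l hθ hlπ hθb
  linarith

theorem stmt15 :
    (∀ θ l : ℝ, 0 < θ → θ < 1 → Real.pi / 2 < l → l ≤ Real.pi →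
      Real.pi / 2 < l * (1 - θ) →
      (∫ t in θ..(l * (1 - θ)), Real.sin t ^ 2) +
        (∫ t in θ..(l - Real.pi / 2), Real.cot (Real.pi - l + t) ^ 2 * Real.sin t ^ 2) +
        (∫ t in (Real.pi / 2)..(l * (1 - θ)), Real.cos t ^ 2) ≤ Real.pi) ∧
    ∃ φ : ℝ → ℝ, (∀ θ : ℝ, 0 < θ → 0 < φ θ) ∧
      Filter.Tendsto φ (𝓝[>] 0) (𝓝 0) ∧
      ∀ ε > (0:ℝ), ∃ θ0 > (0:ℝ), ∀ θ : ℝ, 0 < θ → θ < θ0 →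
        ∀ l : ℝ, Real.pi - φ θ ≤ l → l ≤ Real.pi → Real.pi / 2 < l →
          Real.pi / 2 < l * (1 - θ) →
          |(∫ t in θ..(l * (1 - θ)), Real.sin t ^ 2) +
            (∫ t in θ..(l - Real.pi / 2), Real.cot (Real.pi - l + t) ^ 2 * Real.sin t ^ 2) +
            (∫ t in (Real.pi / 2)..(l * (1 - θ)), Real.cos t ^ 2) - Real.pi| < ε := by
  refine ⟨part1, fun θ => min θ 1 ^ 2, ?_, ?_, ?_⟩
  · intro θ hθ
    have : 0 < min θ 1 := lt_min hθ one_pos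
    positivity
  · have hc : Continuous fun θ : ℝ => min θ 1 ^ 2 := (continuous_id.min continuous_const).pow 2
    have h := (hc.tendsto 0).mono_left (nhdsWithin_le_nhds (s := Set.Ioi (0:ℝ)))
    have h0 : (min (0:ℝ) 1) ^ 2 = 0 := by norm_num
    rwa [h0] at h
  · intro ε hε
    refine ⟨min (ε / 20) (1 / 4), lt_min (by linarith) (by norm_num), ?_⟩
    intro θ hθ hθ0 l hlφ hlπ hl2 hu
    have hpi := Real.pi_gt_three
    have hpi4 := Real.pi_le_four
    have hθ4 : θ ≤ 1 / 4 := le_of_lt (lt_of_lt_of_le hθ0 (min_le_right _ _))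
    have hθε : θ < ε / 20 := lt_of_lt_of_le hθ0 (min_le_left _ _)
    have hθ1 : θ < 1 := by linarith
    have hδθ : Real.pi - l ≤ θ ^ 2 := by
      have hm : min θ 1 = θ := min_eq_left hθ1.le
      simp only [hm] at hlφ
      linarith
    have hθb : θ < l - Real.pi / 2 := by nlinarith
    have huπ : l * (1 - θ) ≤ Real.pi := by nlinarith
    have hupper := part1 θ l hθ hθ1 hl2 hlπ hu
    have hu_low : Real.pi - 5 * θ ≤ l * (1 - θ) := by nlinarith
    have hA := (sinsq_bounds θ (l * (1 - θ)) hθ hθ1 hu huπ).1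
    have hC := (cossq_tail_bounds (l * (1 - θ)) hu.le huπ).1
    have hI := (cossq_head_bounds (θ + (Real.pi - l)) (by linarith) (by linarith)).1
    have hM := mid_lower θ l hθ hθ4 hlπ hδθ hθb
    have hIπ := (cossq_head_bounds (θ + (Real.pi - l)) (by linarith) (by linarith)).2
    have hMlow : Real.pi / 4 - 5 * θ ≤
        ∫ t in θ..(l - Real.pi / 2), Real.cot (Real.pi - l + t) ^ 2 * Real.sin t ^ 2 := by
      have h1 : (1 - 3 * θ) * (Real.pi / 4 - (θ + (Real.pi - l))) ≤
          (1 - 3 * θ) * (∫ t in (θ + (Real.pi - l))..(Real.pi / 2), Real.cos t ^ 2) :=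
        mul_le_mul_of_nonneg_left hI (by linarith)
      nlinarith
    rw [abs_of_nonpos (by linarith)]
    nlinarith
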